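/- Under assumption (H), given a principal eigen-triple (λ⋆, η⋆, h⋆), the following multiplicative ergodic bound holds for every n ≥ 1: ⦀λ⋆^{−n}Q^{(n)} − h⋆⊗η⋆⦀ ≤ 2ρ^n(ε⁺/ε⁻)², where (h⋆⊗η⋆)(x,A) := h⋆(x)η⋆(A) and ρ := 1 − ε⁻/ε⁺. -/

import Mathlib

open MeasureTheory ProbabilityTheory Filter
open scoped ENNReal

/-- The operator `Q(φ)(x) = G(x) ∫ φ(y) M(x,dy)` associated with the kernel
`Q(x,dy) := G(x) M(x,dy)`. -/
noncomputable def Qop {X : Type*} [MeasurableSpace X] (G : X → ℝ) (M : Kernel X X)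
    (φ : X → ℝ) (x : X) : ℝ :=
  G x * ∫ y, φ y ∂(M x)

/-- The `n`-fold iterate `Q^{(n)}` of the operator `Q`, `Q^{(0)} = Id`. -/
noncomputable def Qiter {X : Type*} [MeasurableSpace X] (G : X → ℝ) (M : Kernel X X) :
    ℕ → (X → ℝ) → X → ℝ
  | 0 => fun φ => φ
  | n + 1 => fun φ => Qop G M (Qiter G M n φ)

/-- Bounded measurable functions are integrable w.r.t. a finite measure. -/
lemma intble {X : Type*} [MeasurableSpace X] (μ : Measure X) [IsFiniteMeasure μ] {f : X → ℝ}
    (hf : Measurable f) (C : ℝ) (h : ∀ x, |f x| ≤ C) : Integrable f μ :=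
  (integrable_const C).mono' hf.aestronglyMeasurable
    (ae_of_all _ fun x => by simpa [Real.norm_eq_abs] using h x)

/-- Bochner integral against a `withDensity` with a nonnegative real density. -/
lemma integral_wd {X : Type*} [MeasurableSpace X] (ν : Measure X) {r : X → ℝ}
    (hr0 : ∀ y, 0 ≤ r y) (hrm : Measurable r) (f : X → ℝ) :
    ∫ y, f y ∂(ν.withDensity fun y => ENNReal.ofReal (r y)) = ∫ y, r y * f y ∂ν := by
  have hm : Measurable fun z => (r z).toNNReal := measurable_real_toNNReal.comp hrm
  have h0 : ∫ y, f y ∂(ν.withDensity fun y => ((fun z => (r z).toNNReal) y : ℝ≥0∞))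
      = ∫ y, (r y).toNNReal • f y ∂ν := integral_withDensity_eq_integral_smul hm f
  rw [show (fun y => ENNReal.ofReal (r y)) = fun y => ((fun z => (r z).toNNReal) y : ℝ≥0∞)
    from rfl, h0]
  congr 1
  funext y
  simp [NNReal.smul_def, Real.coe_toNNReal _ (hr0 y)]

/-- The normalized (Doob-transform) operator. -/
noncomputable def Pop {X : Type*} [MeasurableSpace X] (q : X → X → ℝ) (hs : X → ℝ) (lam : ℝ)
    (ν : Measure X) (ψ : X → ℝ) (x : X) : ℝ :=
  (∫ y, q x y * hs y * ψ y ∂ν) / (lam * hs x)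

theorem stmt6 {X : Type*} [MeasurableSpace X]
    (G : X → ℝ) (M : Kernel X X) [IsMarkovKernel M]
    (ν : Measure X) [IsProbabilityMeasure ν]
    (q : X → X → ℝ) (εm εp : ℝ)
    (hq_meas : Measurable fun p : X × X => q p.1 p.2)
    (hεm_pos : 0 < εm) (hεle : εm ≤ εp)
    (hq_lb : ∀ x y, εm ≤ q x y) (hq_ub : ∀ x y, q x y ≤ εp)
    (hG_meas : Measurable G) (hG_pos : ∀ x, 0 < G x) (hG_bdd : ∃ c, ∀ x, G x ≤ c)
    (hH : ∀ x (A : Set X), MeasurableSet A →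
      ENNReal.ofReal (G x) * M x A = ∫⁻ y in A, ENNReal.ofReal (q x y) ∂ν)
    (lam : ℝ) (hlam_pos : 0 < lam)
    (ηs : Measure X) [IsProbabilityMeasure ηs]
    (hs : X → ℝ) (hhs_meas : Measurable hs)
    (hhs_lb : ∀ x, εm / εp ≤ hs x) (hhs_ub : ∀ x, hs x ≤ εp / εm)
    (h_meas_eq : ∀ A : Set X, MeasurableSet A →
      ∫⁻ x, ENNReal.ofReal (G x) * M x A ∂ηs = ENNReal.ofReal lam * ηs A)
    (h_fun_eq : ∀ x, Qop G M hs x = lam * hs x)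
    (h_norm : ∫ x, hs x ∂ηs = 1)
    :
    ∀ n : ℕ, 1 ≤ n → ∀ φ : X → ℝ, Measurable φ → (∀ y, |φ y| ≤ 1) → ∀ x,
      |(lam ^ n)⁻¹ * Qiter G M n φ x - hs x * ∫ y, φ y ∂ηs|
        ≤ 2 * (1 - εm / εp) ^ n * (εp / εm) ^ 2 := by
  -- basic positivity facts
  have hεp_pos : 0 < εp := lt_of_lt_of_le hεm_pos hεle
  set α : ℝ := εm / εp with hα_def
  set B : ℝ := εp / εm with hB_def
  have hα_pos : 0 < α := div_pos hεm_pos hεp_pos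
  have hα_le1 : α ≤ 1 := (div_le_one hεp_pos).2 hεle
  have hρ0 : 0 ≤ 1 - α := by linarith
  have hB_pos : 0 < B := div_pos hεp_pos hεm_pos
  have hhs_pos : ∀ x, 0 < hs x := fun x => lt_of_lt_of_le hα_pos (hhs_lb x)
  have hq_pos : ∀ x y, 0 < q x y := fun x y => lt_of_lt_of_le hεm_pos (hq_lb x y)
  have hqx : ∀ x, Measurable (q x) := fun x => hq_meas.comp (measurable_prodMk_left)
  -- Step 1: measure identity
  have hmeq : ∀ x, (ENNReal.ofReal (G x)) • M x
      = ν.withDensity (fun y => ENNReal.ofReal (q x y)) := by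
    intro x
    ext A hA
    rw [Measure.smul_apply, smul_eq_mul, hH x A hA, withDensity_apply _ hA]
  -- Step 2: integral representation of Q
  have hQrep : ∀ (f : X → ℝ) (x : X), Qop G M f x = ∫ y, q x y * f y ∂ν := by
    intro f x
    have h1 : ∫ y, f y ∂((ENNReal.ofReal (G x)) • M x) = G x * ∫ y, f y ∂(M x) := by
      rw [integral_smul_measure, ENNReal.toReal_ofReal (hG_pos x).le, smul_eq_mul]
    rw [Qop, ← h1, hmeq x, integral_wd ν (fun y => (hq_pos x y).le) (hqx x) f]
  -- Step 3: basic integrals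
  set cν : ℝ := ∫ y, hs y ∂ν with hcν_def
  have hhs_int : ∀ (μ : Measure X), IsProbabilityMeasure μ → Integrable hs μ := by
    intro μ hμ
    exact intble μ hhs_meas B (fun x => by
      rw [abs_of_pos (hhs_pos x)]; exact hhs_ub x)
  have hcν_lb : α ≤ cν := by
    have := integral_mono (integrable_const α) (hhs_int ν inferInstance) hhs_lb
    simpa using this
  have hcν_pos : 0 < cν := lt_of_lt_of_le hα_pos hcν_lb
  have hcν_ub : cν ≤ B := by
    have := integral_mono (hhs_int ν inferInstance) (integrable_const B) hhs_ub
    simpa using this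
  have heig : ∀ x, ∫ y, q x y * hs y ∂ν = lam * hs x :=
    fun x => (hQrep hs x).symm.trans (h_fun_eq x)
  have hqhs_int : ∀ x, Integrable (fun y => q x y * hs y) ν := by
    intro x
    refine intble ν ((hqx x).mul hhs_meas) (εp * B) (fun y => ?_)
    rw [abs_of_pos (mul_pos (hq_pos x y) (hhs_pos y))]
    exact mul_le_mul (hq_ub x y) (hhs_ub y) (hhs_pos y).le hεp_pos.le
  have hlamhs_pos : ∀ x, 0 < lam * hs x := fun x => mul_pos hlam_pos (hhs_pos x)
  have hlamhs_lb : ∀ x, εm * cν ≤ lam * hs x := by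
    intro x
    rw [← heig x, hcν_def, ← integral_const_mul]
    exact integral_mono (by exact (hhs_int ν inferInstance).const_mul εm) (hqhs_int x)
      (fun y => mul_le_mul_of_nonneg_right (hq_lb x y) (hhs_pos y).le)
  have hlamhs_ub : ∀ x, lam * hs x ≤ εp * cν := by
    intro x
    rw [← heig x, hcν_def, ← integral_const_mul]
    exact integral_mono (hqhs_int x) ((hhs_int ν inferInstance).const_mul εp)
      (fun y => mul_le_mul_of_nonneg_right (hq_ub x y) (hhs_pos y).le)
  -- Step 4: one-step contraction for the Doob transform `Pop`
  set P : (X → ℝ) → X → ℝ := Pop q hs lam ν with hP_def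
  have hstep : ∀ (ψ : X → ℝ) (Bb c s : ℝ), Measurable ψ → (∀ y, |ψ y| ≤ Bb) → 0 ≤ c →
      (∀ y, s ≤ ψ y ∧ ψ y ≤ s + c) →
      Measurable (P ψ) ∧ (∀ x, |P ψ x| ≤ Bb) ∧
        ∃ s', ∀ x, s' ≤ P ψ x ∧ P ψ x ≤ s' + (1 - α) * c := by
    intro ψ Bb c s hψm hψb hc0 hψs
    -- measurability
    have hFm : Measurable fun p : X × X => q p.1 p.2 * hs p.2 * ψ p.2 :=
      (hq_meas.mul (hhs_meas.comp measurable_snd)).mul (hψm.comp measurable_snd)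
    have hIm : Measurable fun x => ∫ y, q x y * hs y * ψ y ∂ν :=
      hFm.stronglyMeasurable.integral_prod_right'.measurable
    have hPm : Measurable (P ψ) := by
      rw [hP_def]
      exact hIm.div (measurable_const.mul hhs_meas)
    set K : ℝ := εp * B / (εm * cν) with hK_def
    have hemcν : 0 < εm * cν := mul_pos hεm_pos hcν_pos
    have hkk_nn : ∀ x y, 0 ≤ q x y * hs y / (lam * hs x) := fun x y =>
      div_nonneg (mul_pos (hq_pos x y) (hhs_pos y)).le (hlamhs_pos x).le
    have hkk_ub : ∀ x y, q x y * hs y / (lam * hs x) ≤ K := by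
      intro x y
      exact div_le_div₀ (mul_pos hεp_pos hB_pos).le
        (mul_le_mul (hq_ub x y) (hhs_ub y) (hhs_pos y).le hεp_pos.le) hemcν (hlamhs_lb x)
    have hkk_lb : ∀ x y, α * (hs y / cν) ≤ q x y * hs y / (lam * hs x) := by
      intro x y
      have h1 : (εm * hs y) / (εp * cν) ≤ q x y * hs y / (lam * hs x) :=
        div_le_div₀ (mul_pos (hq_pos x y) (hhs_pos y)).le
          (mul_le_mul_of_nonneg_right (hq_lb x y) (hhs_pos y).le) (hlamhs_pos x) (hlamhs_ub x)
      calc α * (hs y / cν) = (εm * hs y) / (εp * cν) := (mul_div_mul_comm εm (hs y) εp cν).symm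
        _ ≤ _ := h1
    -- integrability facts
    have hf3 : ∀ x, Integrable (fun y => q x y * hs y / (lam * hs x)) ν := by
      intro x
      refine intble ν (((hqx x).mul hhs_meas).div_const _) K (fun y => ?_)
      rw [abs_of_nonneg (hkk_nn x y)]; exact hkk_ub x y
    have hf1 : ∀ x, Integrable (fun y => q x y * hs y / (lam * hs x) * ψ y) ν := by
      intro x
      refine intble ν ((((hqx x).mul hhs_meas).div_const _).mul hψm) (K * Bb) (fun y => ?_)
      rw [abs_mul, abs_of_nonneg (hkk_nn x y)]
      exact mul_le_mul (hkk_ub x y) (hψb y) (abs_nonneg _)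
        (le_trans (hkk_nn x y) (hkk_ub x y))
    have hf4 : Integrable (fun y => hs y / cν) ν := (hhs_int ν inferInstance).div_const cν
    have hf2 : Integrable (fun y => hs y / cν * ψ y) ν := by
      refine intble ν ((hhs_meas.div_const cν).mul hψm) (B / cν * Bb) (fun y => ?_)
      rw [abs_mul, abs_of_nonneg (div_nonneg (hhs_pos y).le hcν_pos.le)]
      exact mul_le_mul ((div_le_div_iff_of_pos_right hcν_pos).2 (hhs_ub y)) (hψb y)
        (abs_nonneg _) (div_nonneg hB_pos.le hcν_pos.le)
    -- pointwise integral representation of `P ψ`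
    have hPx : ∀ x, P ψ x = ∫ y, q x y * hs y / (lam * hs x) * ψ y ∂ν := by
      intro x
      rw [hP_def]
      rw [Pop, ← integral_div]
      congr 1
      funext y
      ring
    have hkk_one : ∀ x, ∫ y, q x y * hs y / (lam * hs x) ∂ν = 1 := by
      intro x
      rw [integral_div, heig x, div_self (hlamhs_pos x).ne']
    have hm_one : ∫ y, hs y / cν ∂ν = 1 := by
      rw [integral_div, ← hcν_def, div_self hcν_pos.ne']
    -- the uniform bound is preserved
    have hPb : ∀ x, |P ψ x| ≤ Bb := by
      intro x
      rw [hPx x, abs_le]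
      constructor
      · have h1 : ∫ y, q x y * hs y / (lam * hs x) * (-Bb) ∂ν
            ≤ ∫ y, q x y * hs y / (lam * hs x) * ψ y ∂ν :=
          integral_mono ((hf3 x).mul_const _) (hf1 x) (fun y =>
            mul_le_mul_of_nonneg_left (neg_le_of_abs_le (hψb y)) (hkk_nn x y))
        calc -Bb = (∫ y, q x y * hs y / (lam * hs x) ∂ν) * (-Bb) := by
              rw [hkk_one x, one_mul]
          _ = ∫ y, q x y * hs y / (lam * hs x) * (-Bb) ∂ν := (integral_mul_const _ _).symm
          _ ≤ _ := h1
      · have h1 : ∫ y, q x y * hs y / (lam * hs x) * ψ y ∂ν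
            ≤ ∫ y, q x y * hs y / (lam * hs x) * Bb ∂ν :=
          integral_mono (hf1 x) ((hf3 x).mul_const _) (fun y =>
            mul_le_mul_of_nonneg_left (le_of_abs_le (hψb y)) (hkk_nn x y))
        calc ∫ y, q x y * hs y / (lam * hs x) * ψ y ∂ν
            ≤ ∫ y, q x y * hs y / (lam * hs x) * Bb ∂ν := h1
          _ = (∫ y, q x y * hs y / (lam * hs x) ∂ν) * Bb := integral_mul_const _ _
          _ = Bb := by rw [hkk_one x, one_mul]
    -- the contraction
    refine ⟨hPm, hPb, α * ∫ y, hs y / cν * ψ y ∂ν + (1 - α) * s, fun x => ?_⟩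
    set g : X → ℝ := fun y => q x y * hs y / (lam * hs x) - α * (hs y / cν) with hg_def
    have hg_nn : ∀ y, 0 ≤ g y := fun y => sub_nonneg.2 (hkk_lb x y)
    have hg_int : Integrable g ν := (hf3 x).sub (hf4.const_mul α)
    have hgψ_int : Integrable (fun y => g y * ψ y) ν := by
      have : (fun y => g y * ψ y)
          = fun y => q x y * hs y / (lam * hs x) * ψ y - α * (hs y / cν * ψ y) := by
        funext y; rw [hg_def]; ring
      rw [this]
      exact (hf1 x).sub (hf2.const_mul α)
    have hg_tot : ∫ y, g y ∂ν = 1 - α := by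
      rw [hg_def, integral_sub (hf3 x) (hf4.const_mul α), hkk_one x, integral_const_mul,
        hm_one, mul_one]
    have hgψ : ∫ y, g y * ψ y ∂ν = P ψ x - α * ∫ y, hs y / cν * ψ y ∂ν := by
      have h1 : (fun y => g y * ψ y)
          = fun y => q x y * hs y / (lam * hs x) * ψ y - α * (hs y / cν * ψ y) := by
        funext y; rw [hg_def]; ring
      rw [h1, integral_sub (hf1 x) (hf2.const_mul α), integral_const_mul, hPx x]
    have hlow : (1 - α) * s ≤ ∫ y, g y * ψ y ∂ν := by
      have h1 : ∫ y, g y * s ∂ν ≤ ∫ y, g y * ψ y ∂ν :=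
        integral_mono (hg_int.mul_const s) hgψ_int (fun y =>
          mul_le_mul_of_nonneg_left (hψs y).1 (hg_nn y))
      calc (1 - α) * s = (∫ y, g y ∂ν) * s := by rw [hg_tot]
        _ = ∫ y, g y * s ∂ν := (integral_mul_const _ _).symm
        _ ≤ _ := h1
    have hhigh : ∫ y, g y * ψ y ∂ν ≤ (1 - α) * (s + c) := by
      have h1 : ∫ y, g y * ψ y ∂ν ≤ ∫ y, g y * (s + c) ∂ν :=
        integral_mono hgψ_int (hg_int.mul_const _) (fun y =>
          mul_le_mul_of_nonneg_left (hψs y).2 (hg_nn y))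
      calc ∫ y, g y * ψ y ∂ν ≤ ∫ y, g y * (s + c) ∂ν := h1
        _ = (∫ y, g y ∂ν) * (s + c) := integral_mul_const _ _
        _ = (1 - α) * (s + c) := by rw [hg_tot]
    rw [hgψ] at hlow hhigh
    constructor
    · linarith
    · nlinarith [hlow, hhigh]
  -- Step 5: the measure `q(·,y)`-average identity coming from left eigenmeasure
  set r : X → ℝ := fun y => ∫ x, q x y ∂ηs with hr_def
  have hr_meas : Measurable r := by
    rw [hr_def]
    exact hq_meas.stronglyMeasurable.integral_prod_left.measurable
  have hqy_int : ∀ y, Integrable (fun x => q x y) ηs := by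
    intro y
    refine intble ηs (hq_meas.comp measurable_prodMk_right) εp (fun x => ?_)
    rw [abs_of_pos (hq_pos x y)]; exact hq_ub x y
  have hr_lb : ∀ y, εm ≤ r y := by
    intro y
    have := integral_mono (integrable_const εm) (hqy_int y) (fun x => hq_lb x y)
    simpa [hr_def] using this
  have hwd : ν.withDensity (fun y => ENNReal.ofReal (r y)) = ENNReal.ofReal lam • ηs := by
    ext A hA
    rw [withDensity_apply _ hA, Measure.smul_apply, smul_eq_mul]
    have h1 : ∀ y, ENNReal.ofReal (r y) = ∫⁻ x, ENNReal.ofReal (q x y) ∂ηs := by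
      intro y
      rw [hr_def]
      exact ofReal_integral_eq_lintegral_ofReal (hqy_int y)
        (ae_of_all _ fun x => (hq_pos x y).le)
    have hswap : ∫⁻ x, ∫⁻ y, ENNReal.ofReal (q x y) ∂(ν.restrict A) ∂ηs
        = ∫⁻ y, ∫⁻ x, ENNReal.ofReal (q x y) ∂ηs ∂(ν.restrict A) :=
      lintegral_lintegral_swap ((ENNReal.measurable_ofReal.comp hq_meas).aemeasurable)
    calc ∫⁻ y in A, ENNReal.ofReal (r y) ∂ν
        = ∫⁻ y in A, ∫⁻ x, ENNReal.ofReal (q x y) ∂ηs ∂ν := lintegral_congr fun y => h1 y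
      _ = ∫⁻ x, ∫⁻ y in A, ENNReal.ofReal (q x y) ∂ν ∂ηs := hswap.symm
      _ = ∫⁻ x, ENNReal.ofReal (G x) * M x A ∂ηs := lintegral_congr fun x => (hH x A hA).symm
      _ = ENNReal.ofReal lam * ηs A := h_meas_eq A hA
  have hkey : ∀ w : X → ℝ, ∫ y, r y * w y ∂ν = lam * ∫ y, w y ∂ηs := by
    intro w
    have h1 := integral_wd ν (fun y => le_trans hεm_pos.le (hr_lb y)) hr_meas w
    rw [← h1, hwd, integral_smul_measure, ENNReal.toReal_ofReal hlam_pos.le, smul_eq_mul]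
  -- Step 6: invariance of `∫ hs · (P w) dηs`
  have hJstep : ∀ (w : X → ℝ) (Cw : ℝ), Measurable w → 0 ≤ Cw → (∀ y, |w y| ≤ Cw) →
      ∫ x, hs x * P w x ∂ηs = ∫ y, hs y * w y ∂ηs := by
    intro w Cw hwm hCw hwb
    have hww : ∀ x, hs x * P w x = (∫ y, q x y * (hs y * w y) ∂ν) / lam := by
      intro x
      rw [hP_def, Pop]
      have h2 : (fun y => q x y * hs y * w y) = fun y => q x y * (hs y * w y) := by
        funext y; ring
      rw [h2]
      generalize (∫ y, q x y * (hs y * w y) ∂ν) = I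
      field_simp
      exact mul_div_cancel_left₀ I (hhs_pos x).ne'
    have hint : Integrable (Function.uncurry fun x y => q x y * (hs y * w y)) (ηs.prod ν) := by
      apply intble _ (hq_meas.mul ((hhs_meas.mul hwm).comp measurable_snd)) (εp * (B * Cw))
      rintro ⟨x, y⟩
      show |q x y * (hs y * w y)| ≤ εp * (B * Cw)
      rw [abs_mul, abs_of_pos (hq_pos x y), abs_mul, abs_of_pos (hhs_pos y)]
      exact mul_le_mul (hq_ub x y)
        (mul_le_mul (hhs_ub y) (hwb y) (abs_nonneg _) hB_pos.le)
        (mul_nonneg (hhs_pos y).le (abs_nonneg _)) hεp_pos.le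
    calc ∫ x, hs x * P w x ∂ηs
        = ∫ x, (∫ y, q x y * (hs y * w y) ∂ν) / lam ∂ηs :=
          integral_congr_ae (Filter.Eventually.of_forall hww)
      _ = (∫ x, ∫ y, q x y * (hs y * w y) ∂ν ∂ηs) / lam := integral_div _ _
      _ = (∫ y, ∫ x, q x y * (hs y * w y) ∂ηs ∂ν) / lam := by
          rw [integral_integral_swap hint]
      _ = (∫ y, r y * (hs y * w y) ∂ν) / lam := by
          congr 1
          exact integral_congr_ae (Filter.Eventually.of_forall fun y =>
            integral_mul_const (hs y * w y) fun x => q x y)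
      _ = (lam * ∫ y, hs y * w y ∂ηs) / lam := by rw [hkey]
      _ = ∫ y, hs y * w y ∂ηs := by field_simp
  -- Step 7: main argument
  intro n hn φ hφm hφb
  set ψ0 : X → ℝ := fun y => φ y / hs y with hψ0_def
  set ψ : ℕ → X → ℝ := fun k => P^[k] ψ0 with hψ_def
  have hψ_succ : ∀ k, ψ (k + 1) = P (ψ k) := fun k => Function.iterate_succ_apply' P k ψ0
  have hψzero : ψ 0 = ψ0 := rfl
  -- representation of Q iterates through P iterates
  have hrep : ∀ k x, Qiter G M k φ x = lam ^ k * hs x * ψ k x := by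
    intro k
    induction k with
    | zero =>
      intro x
      show φ x = lam ^ 0 * hs x * (φ x / hs x)
      rw [pow_zero, one_mul, mul_comm (hs x), div_mul_cancel₀ _ (hhs_pos x).ne']
    | succ k ih =>
      intro x
      have h1 : Qiter G M (k + 1) φ x = ∫ y, q x y * Qiter G M k φ y ∂ν := hQrep _ x
      have h2 : (fun y => q x y * Qiter G M k φ y)
          = fun y => lam ^ k * (q x y * hs y * ψ k y) := by
        funext y; rw [ih y]; ring
      rw [h1, h2, integral_const_mul, hψ_succ k]
      show lam ^ k * ∫ y, q x y * hs y * ψ k y ∂ν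
        = lam ^ (k + 1) * hs x * ((∫ y, q x y * hs y * ψ k y ∂ν) / (lam * hs x))
      generalize (∫ y, q x y * hs y * ψ k y ∂ν) = I
      rw [show lam ^ (k + 1) * hs x * (I / (lam * hs x))
          = lam ^ k * I * ((lam * hs x) / (lam * hs x)) from by ring,
        div_self (hlamhs_pos x).ne', mul_one]
  -- the iterates of P stay bounded and have geometrically shrinking oscillation
  have hψ0m : Measurable ψ0 := hφm.div hhs_meas
  have hB1 : ∀ y, |ψ0 y| ≤ B := by
    intro y
    rw [hψ0_def]
    show |φ y / hs y| ≤ B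
    rw [abs_div, abs_of_pos (hhs_pos y)]
    calc |φ y| / hs y ≤ 1 / α := div_le_div₀ (by norm_num) (hφb y) hα_pos (hhs_lb y)
      _ = B := by rw [hα_def, hB_def, one_div_div]
  have hiter : ∀ k, Measurable (ψ k) ∧ (∀ y, |ψ k y| ≤ B) ∧
      ∃ s, ∀ y, s ≤ ψ k y ∧ ψ k y ≤ s + (1 - α) ^ k * (2 * B) := by
    intro k
    induction k with
    | zero =>
      refine ⟨hψ0m, hB1, -B, fun y => ?_⟩
      have h1 := abs_le.1 (hB1 y)
      rw [pow_zero, hψzero]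
      exact ⟨h1.1, by linarith [h1.2]⟩
    | succ k ih =>
      obtain ⟨hm, hb, s, hss⟩ := ih
      obtain ⟨hm', hb', s', hss'⟩ := hstep (ψ k) B ((1 - α) ^ k * (2 * B)) s hm hb
        (mul_nonneg (pow_nonneg hρ0 k) (by linarith)) hss
      refine ⟨by rw [hψ_succ k]; exact hm', by rw [hψ_succ k]; exact hb', s', fun y => ?_⟩
      rw [hψ_succ k]
      have h1 := hss' y
      have h2 : (1 - α) * ((1 - α) ^ k * (2 * B)) = (1 - α) ^ (k + 1) * (2 * B) := by ring
      exact ⟨h1.1, by linarith [h1.2]⟩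
  -- the `hs·ψ k`-averages against ηs are all equal to `∫ φ dηs`
  have hJ : ∀ k, ∫ x, hs x * ψ k x ∂ηs = ∫ y, φ y ∂ηs := by
    intro k
    induction k with
    | zero =>
      refine integral_congr_ae (Filter.Eventually.of_forall fun y => ?_)
      show hs y * (φ y / hs y) = φ y
      rw [mul_comm, div_mul_cancel₀ _ (hhs_pos y).ne']
    | succ k ih =>
      obtain ⟨hm, hb, _⟩ := hiter k
      rw [hψ_succ k, hJstep (ψ k) B hm hB_pos.le hb, ih]
  -- conclusion
  intro x
  obtain ⟨hm, hb, s, hss⟩ := hiter n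
  have hpair : ∀ y, |ψ n x - ψ n y| ≤ (1 - α) ^ n * (2 * B) := by
    intro y
    have h1 := hss x
    have h2 := hss y
    rw [abs_le]
    exact ⟨by linarith [h1.1, h2.2], by linarith [h1.2, h2.1]⟩
  have e1 : (lam ^ n)⁻¹ * Qiter G M n φ x = hs x * ψ n x := by
    rw [hrep n x,
      show (lam ^ n)⁻¹ * (lam ^ n * hs x * ψ n x) = hs x * ψ n x * (lam ^ n / lam ^ n) from
        by ring,
      div_self (pow_ne_zero n hlam_pos.ne'), mul_one]
  have hint1 : Integrable (fun y => hs y * ψ n y) ηs :=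
    intble _ (hhs_meas.mul hm) (B * B) (fun y => by
      rw [abs_mul, abs_of_pos (hhs_pos y)]
      exact mul_le_mul (hhs_ub y) (hb y) (abs_nonneg _) hB_pos.le)
  have e2 : hs x * ψ n x - hs x * ∫ y, φ y ∂ηs = hs x * ∫ y, (ψ n x - ψ n y) * hs y ∂ηs := by
    rw [← hJ n, ← mul_sub]
    congr 1
    have hint2 : Integrable (fun y => ψ n x * hs y) ηs := (hhs_int ηs inferInstance).const_mul _
    rw [show (fun y => (ψ n x - ψ n y) * hs y) = fun y => ψ n x * hs y - hs y * ψ n y from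
      by funext y; ring]
    rw [integral_sub hint2 hint1, integral_const_mul, h_norm, mul_one]
  have hcoef : (0:ℝ) ≤ (1 - α) ^ n * (2 * B) := mul_nonneg (pow_nonneg hρ0 n) (by linarith)
  have h4 : ∀ y, |(ψ n x - ψ n y) * hs y| ≤ (1 - α) ^ n * (2 * B) * hs y := by
    intro y
    rw [abs_mul, abs_of_pos (hhs_pos y)]
    exact mul_le_mul_of_nonneg_right (hpair y) (hhs_pos y).le
  have hint3 : Integrable (fun y => (ψ n x - ψ n y) * hs y) ηs := by
    refine intble _ ((measurable_const.sub hm).mul hhs_meas) ((1 - α) ^ n * (2 * B) * B)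
      (fun y => le_trans (h4 y) (mul_le_mul_of_nonneg_left (hhs_ub y) hcoef))
  have e3 : |∫ y, (ψ n x - ψ n y) * hs y ∂ηs| ≤ (1 - α) ^ n * (2 * B) := by
    calc |∫ y, (ψ n x - ψ n y) * hs y ∂ηs| ≤ ∫ y, |(ψ n x - ψ n y) * hs y| ∂ηs := by
          simpa only [Real.norm_eq_abs] using
            norm_integral_le_integral_norm (fun y => (ψ n x - ψ n y) * hs y) (μ := ηs)
      _ ≤ ∫ y, (1 - α) ^ n * (2 * B) * hs y ∂ηs :=
          integral_mono hint3.abs ((hhs_int ηs inferInstance).const_mul _) h4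
      _ = (1 - α) ^ n * (2 * B) * 1 := by rw [integral_const_mul, h_norm]
      _ = (1 - α) ^ n * (2 * B) := mul_one _
  rw [e1]
  calc |hs x * ψ n x - hs x * ∫ y, φ y ∂ηs|
      = hs x * |∫ y, (ψ n x - ψ n y) * hs y ∂ηs| := by
        rw [e2, abs_mul, abs_of_pos (hhs_pos x)]
    _ ≤ B * ((1 - α) ^ n * (2 * B)) := mul_le_mul (hhs_ub x) e3 (abs_nonneg _) hB_pos.le
    _ = 2 * (1 - α) ^ n * B ^ 2 := by ring
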